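/- Any covering of the segment (ε, 1) by N sets, each of hyperbolic diameter at most D in the annulus A(ε/2, 2), requires N ≥ (hyperbolic diameter of (ε,1) in A(ε/2,2))/D ≥ c·log|log ε|/D for small ε. Consequently, the number of maps (0,1) → X_ε of bounded ω-norm (holomorphic extension to a 1-neighborhood with bound 2) needed to cover X_ε = {xy = ε} ∩ (-1,1)² tends to infinity as ε → 0, at rate at least proportional to log|log ε|. -/

import Mathlib

open Set UpperHalfPlane

/-- `p : ℍ → ℂ` is a holomorphic covering map onto the plane domain `S`:
it takes values in `S`, is surjective onto `S`, holomorphic, and a covering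
map onto `S`.  The Poincaré metric on `ℍ` then descends to `S`. -/
def IsHolomorphicCoveringOnto (p : UpperHalfPlane → ℂ) (S : Set ℂ) : Prop :=
  ∃ h : ∀ z, p z ∈ S,
    Function.Surjective (Set.codRestrict p S h) ∧
    (∃ P : ℂ → ℂ, DifferentiableOn ℂ P {z : ℂ | 0 < z.im} ∧
      ∀ z : UpperHalfPlane, P ↑z = p z) ∧
    IsCoveringMap (Set.codRestrict p S h)

/-- The hyperbolic distance on a domain covered by `p : ℍ → ℂ`: the infimum of
hyperbolic distances between preimages.  (Here `ℍ` carries its Poincaré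
metric.) -/
noncomputable def hypDist (p : UpperHalfPlane → ℂ) (x y : ℂ) : ℝ :=
  sInf {d | ∃ z w : UpperHalfPlane, p z = x ∧ p w = y ∧ d = dist z w}

/-- The annulus `{z : ℂ | a < |z| < b}`. -/
def Annulus (a b : ℝ) : Set ℂ := {z : ℂ | a < ‖z‖ ∧ ‖z‖ < b}

/-- The complex `1`-neighborhood of the interval `(0,1)`. -/
def NbhdOne : Set ℂ := {z : ℂ | ∃ t ∈ Set.Ioo (0:ℝ) 1, dist z (t : ℂ) < 1}

/-- The hyperbola piece `X_ε = {xy = ε} ∩ (-1,1)²`, viewed inside `ℂ × ℂ`. -/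
def Xe (ε : ℝ) : Set (ℂ × ℂ) :=
  {w | w.1.im = 0 ∧ w.2.im = 0 ∧ w.1.re ∈ Set.Ioo (-1:ℝ) 1 ∧
    w.2.re ∈ Set.Ioo (-1:ℝ) 1 ∧ w.1 * w.2 = (ε : ℂ)}

open Set Metric Complex
open scoped NNReal ENNReal








noncomputable section CCLB

/-- The open upper half plane as a subset of `ℂ`. -/
def UHP : Set ℂ := {z : ℂ | 0 < z.im}

lemma isOpen_UHP : IsOpen UHP := isOpen_lt continuous_const Complex.continuous_im

/-- Primitive of a holomorphic function on a disc. -/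
lemma exists_primitive {f : ℂ → ℂ} {c : ℂ} {r : ℝ≥0} (hr : 0 < r)
    (hf : DifferentiableOn ℂ f (closedBall c (r : ℝ))) :
    ∃ g : ℂ → ℂ, ∀ z ∈ ball c (r : ℝ), HasDerivAt g (f z) z := by
  have hp := hf.hasFPowerSeriesOnBall hr
  set p := cauchyPowerSeries f c r with hpdef
  refine ⟨fun z => ∑' n, p.coeff n / ((n : ℂ) + 1) * (z - c) ^ (n + 1), ?_⟩
  intro z hz
  rw [mem_ball] at hz
  set ρ : ℝ≥0 := ⟨(dist z c + r) / 2, by positivity⟩ with hρdef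
  have hρ1 : dist z c < (ρ : ℝ) := by
    simp only [hρdef, NNReal.coe_mk]
    change dist z c < (dist z c + (r:ℝ)) / 2
    linarith
  have hρ2 : (ρ : ℝ) < r := by
    simp only [hρdef, NNReal.coe_mk]
    change (dist z c + (r:ℝ)) / 2 < r
    linarith [dist_nonneg (x := z) (y := c)]
  have hρrad : (ρ : ℝ≥0∞) < p.radius := by
    refine lt_of_lt_of_le ?_ hp.r_le
    exact_mod_cast hρ2
  have hsum : Summable fun n => ‖p n‖ * (ρ : ℝ) ^ n := p.summable_norm_mul_pow hρrad
  have hcoef : ∀ n, ‖p.coeff n‖ ≤ ‖p n‖ := by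
    intro n
    have h := (p n).le_opNorm (1 : Fin n → ℂ)
    simp only [Pi.one_apply, norm_one, Finset.prod_const_one, mul_one] at h
    exact h
  have key : HasDerivAt (fun w => ∑' n, p.coeff n / ((n : ℂ) + 1) * (w - c) ^ (n + 1))
      (∑' n, p.coeff n * (z - c) ^ n) z := by
    refine hasDerivAt_tsum_of_isPreconnected (u := fun n => ‖p n‖ * (ρ : ℝ) ^ n) hsum
      isOpen_ball (convex_ball c (ρ : ℝ)).isPreconnected
      (g' := fun n w => p.coeff n * (w - c) ^ n) ?_ ?_ (mem_ball_self (lt_of_le_of_lt dist_nonneg hρ1)) ?_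
      (by rwa [mem_ball])
    · intro n w _
      have h1 : HasDerivAt (fun w : ℂ => (w - c) ^ (n + 1))
          (((n : ℂ) + 1) * (w - c) ^ n) w := by
        have := ((hasDerivAt_id w).sub_const c).fun_pow (n + 1)
        simpa using this
      have h2 := h1.const_mul (p.coeff n / ((n : ℂ) + 1))
      have hne : ((n : ℂ) + 1) ≠ 0 := Nat.cast_add_one_ne_zero n
      have h3 : p.coeff n / ((n : ℂ) + 1) * (((n : ℂ) + 1) * (w - c) ^ n)
          = p.coeff n * (w - c) ^ n := by
        field_simp
      simpa only [h3] using h2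
    · intro n w hw
      rw [mem_ball] at hw
      have : ‖p.coeff n * (w - c) ^ n‖ = ‖p.coeff n‖ * (dist w c) ^ n := by
        simp [norm_mul, norm_pow, dist_eq_norm]
      rw [this]
      exact mul_le_mul (hcoef n) (pow_le_pow_left₀ dist_nonneg hw.le n)
        (by positivity) (norm_nonneg _)
    · refine Summable.congr summable_zero ?_
      intro n
      simp
  convert key using 1
  have hz' : ‖z - c‖ < (r : ℝ) := by rwa [dist_eq_norm] at hz
  have hmem : z - c ∈ Metric.eball (0 : ℂ) (r : ℝ≥0∞) := by
    rw [Metric.mem_eball, edist_zero_right]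
    exact_mod_cast hz' 
  have hs := hp.hasSum hmem
  have : f z = f (c + (z - c)) := by ring_nf
  rw [this, ← hs.tsum_eq]
  refine tsum_congr fun n => ?_
  rw [FormalMultilinearSeries.apply_eq_pow_smul_coeff, smul_eq_mul]
  ring

/-- A function with vanishing derivative on a ball is constant there. -/
lemma const_of_deriv_zero {F : ℂ → ℂ} {c : ℂ} {r : ℝ}
    (h : ∀ z ∈ ball c r, HasDerivAt F 0 z) {x y : ℂ}
    (hx : x ∈ ball c r) (hy : y ∈ ball c r) : F x = F y := by
  refine Convex.is_const_of_fderivWithin_eq_zero (𝕜 := ℂ) (convex_ball c r) ?_ ?_ hx hy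
  · intro z hz
    exact (h z hz).differentiableAt.differentiableWithinAt
  · intro z hz
    rw [fderivWithin_of_isOpen isOpen_ball hz]
    have := (h z hz).hasFDerivAt.fderiv
    rw [this]
    ext v
    simp


/-- Exhausting balls for the upper half plane. -/
def cB (n : ℕ) : ℂ := Complex.I * ((n : ℝ) + 2)
def rB (n : ℕ) : ℝ := ((n : ℝ) + 2) - 1 / ((n : ℝ) + 2)

lemma rB_pos (n : ℕ) : 0 < rB n := by
  have h2 : (2:ℝ) ≤ (n : ℝ) + 2 := by linarith [Nat.cast_nonneg (α := ℝ) n]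
  have : 1 / ((n:ℝ) + 2) ≤ 1 := by
    rw [div_le_one (by positivity)]; linarith
  unfold rB; linarith

lemma closedBall_subset_UHP (n : ℕ) : closedBall (cB n) (rB n) ⊆ UHP := by
  intro z hz
  rw [mem_closedBall] at hz
  have him : |z.im - ((n:ℝ) + 2)| ≤ rB n := by
    have h1 : |(z - cB n).im| ≤ ‖(z - cB n)‖ := Complex.abs_im_le_norm _
    have h2 : (z - cB n).im = z.im - ((n:ℝ) + 2) := by
      simp [cB, Complex.sub_im, Complex.mul_im]
    rw [h2] at h1
    calc |z.im - ((n:ℝ)+2)| ≤ ‖(z - cB n)‖ := h1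
    _ = dist z (cB n) := (Complex.dist_eq z (cB n)).symm
    _ ≤ rB n := hz
  have := abs_le.1 him
  have hpos : 0 < 1 / ((n:ℝ) + 2) := by positivity
  show 0 < z.im
  unfold rB at this
  linarith [this.1]

lemma I_mem_ball (n : ℕ) : Complex.I ∈ ball (cB n) (rB n) := by
  rw [mem_ball, Complex.dist_eq]
  have h1 : Complex.I - cB n = Complex.I * (((-((n:ℝ) + 1)) : ℝ) : ℂ) := by
    unfold cB; push_cast; ring
  have hn0 : (0:ℝ) ≤ (n:ℝ) := Nat.cast_nonneg n
  rw [h1, norm_mul, Complex.norm_I, one_mul, Complex.norm_real, Real.norm_eq_abs,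
    abs_of_nonpos (by linarith), neg_neg]
  have : 1 / ((n:ℝ) + 2) < 1 := by
    rw [div_lt_one (by positivity)]; linarith
  unfold rB; linarith

lemma ball_mono_UHP {m n : ℕ} (h : m ≤ n) :
    ball (cB m) (rB m) ⊆ ball (cB n) (rB n) := by
  intro z hz
  rw [mem_ball] at hz ⊢
  have hmn : (m:ℝ) ≤ (n:ℝ) := by exact_mod_cast h
  have hcc : dist (cB m) (cB n) = (n : ℝ) - m := by
    rw [Complex.dist_eq]
    have h1 : cB m - cB n = Complex.I * ((((m:ℝ) - (n:ℝ)) : ℝ) : ℂ) := by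
      unfold cB; push_cast; ring
    rw [h1, norm_mul, Complex.norm_I, one_mul, Complex.norm_real, Real.norm_eq_abs,
      abs_of_nonpos (sub_nonpos.2 hmn), neg_sub]
  have hr : rB m + ((n:ℝ) - m) ≤ rB n := by
    unfold rB
    have : 1 / ((n:ℝ) + 2) ≤ 1 / ((m:ℝ) + 2) := by
      apply div_le_div_of_nonneg_left (by norm_num) (by positivity)
      linarith
    linarith
  calc dist z (cB n) ≤ dist z (cB m) + dist (cB m) (cB n) := dist_triangle _ _ _
    _ < rB m + ((n:ℝ) - m) := by rw [hcc]; linarith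
    _ ≤ rB n := hr

lemma exists_ball_UHP {z : ℂ} (hz : z ∈ UHP) : ∃ n : ℕ, z ∈ ball (cB n) (rB n) := by
  have hzim : 0 < z.im := hz
  obtain ⟨n, hn⟩ := exists_nat_gt (((‖z‖)^2 + 2) / (2 * z.im))
  refine ⟨n, ?_⟩
  rw [mem_ball, Complex.dist_eq]
  set M : ℝ := (n:ℝ) + 2 with hM
  have hM2 : 2 ≤ M := by
    have : (0:ℝ) ≤ (n:ℝ) := Nat.cast_nonneg n
    simp only [hM]; linarith
  have hMpos : (0:ℝ) < M := by linarith
  have habs : (‖(z - cB n)‖)^2 = (‖z‖)^2 - 2 * M * z.im + M^2 := by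
    rw [Complex.sq_norm, Complex.sq_norm, Complex.normSq_apply, Complex.normSq_apply]
    simp [cB, Complex.sub_re, Complex.sub_im, Complex.mul_re, Complex.mul_im, hM]
    ring
  have hrB : rB n = M - 1/M := rfl
  have hlt : (‖(z - cB n)‖)^2 < (rB n)^2 := by
    rw [habs, hrB]
    have h1 : (M - 1/M)^2 = M^2 - 2 + 1/M^2 := by field_simp; ring
    rw [h1]
    have h3 : (‖z‖)^2 + 2 < (n:ℝ) * (2 * z.im) := by
      rwa [div_lt_iff₀ (by positivity)] at hn
    have h4 : (0:ℝ) < 1/M^2 := by positivity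
    have h5 : (n:ℝ) * (2 * z.im) ≤ M * (2 * z.im) := by
      have : (n:ℝ) ≤ M := by simp only [hM]; linarith
      nlinarith [hzim.le]
    nlinarith
  have h0 : 0 ≤ ‖(z - cB n)‖ := norm_nonneg _
  nlinarith [rB_pos n]

/-- Existence of a holomorphic logarithm on the upper half plane. -/
lemma exists_log_UHP {f : ℂ → ℂ} (hd : DifferentiableOn ℂ f UHP)
    (hnz : ∀ z ∈ UHP, f z ≠ 0) :
    ∃ g : ℂ → ℂ, (∀ z ∈ UHP, DifferentiableAt ℂ g z) ∧ ∀ z ∈ UHP, Complex.exp (g z) = f z := by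
  classical
  have hf_an : AnalyticOnNhd ℂ f UHP := hd.analyticOnNhd isOpen_UHP
  set h : ℂ → ℂ := fun z => deriv f z / f z with hh
  have hh_diff : DifferentiableOn ℂ h UHP := by
    exact ((hf_an.deriv).differentiableOn).div hd hnz
  -- primitive on each ball
  have hprim : ∀ n : ℕ, ∃ G : ℂ → ℂ, ∀ z ∈ ball (cB n) (rB n), HasDerivAt G (h z) z := by
    intro n
    have : DifferentiableOn ℂ h (closedBall (cB n) ((⟨rB n, (rB_pos n).le⟩ : ℝ≥0) : ℝ)) :=
      hh_diff.mono (closedBall_subset_UHP n)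
    exact exists_primitive (by exact_mod_cast rB_pos n) this
  choose G hG using hprim
  -- normalized logs
  set L : ℕ → ℂ → ℂ := fun n z => G n z - G n Complex.I + Complex.log (f Complex.I) with hL
  have hIUHP : Complex.I ∈ UHP := by simp [UHP]
  have hLderiv : ∀ n, ∀ z ∈ ball (cB n) (rB n), HasDerivAt (L n) (h z) z := by
    intro n z hz
    have h0 := (hG n z hz).sub_const (G n Complex.I - Complex.log (f Complex.I))
    have heq : (fun y => G n y - (G n Complex.I - Complex.log (f Complex.I))) = L n := by
      funext y; rw [hL]; ring
    rwa [heq] at h0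
  have hLexp : ∀ n, ∀ z ∈ ball (cB n) (rB n), Complex.exp (L n z) = f z := by
    intro n z hz
    -- K z := f z * exp (- G n z) is constant on the ball
    have hK : ∀ x ∈ ball (cB n) (rB n), HasDerivAt (fun y => f y * Complex.exp (-(G n y))) 0 x := by
      intro x hx
      have hxU : x ∈ UHP := (closedBall_subset_UHP n) (ball_subset_closedBall hx)
      have hfd : HasDerivAt f (deriv f x) x :=
        (hd.differentiableAt (isOpen_UHP.mem_nhds hxU)).hasDerivAt
      have hGd : HasDerivAt (fun y => -(G n y)) (-(h x)) x := (hG n x hx).neg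
      have hexp : HasDerivAt (fun y => Complex.exp (-(G n y)))
          (Complex.exp (-(G n x)) * (-(h x))) x := by
        exact hGd.cexp
      have hmul := hfd.fun_mul hexp
      have hfx : f x ≠ 0 := hnz x hxU
      have heq : deriv f x * Complex.exp (-(G n x))
          + f x * (Complex.exp (-(G n x)) * -(h x)) = 0 := by
        simp only [hh]
        field_simp
        ring
      rw [heq] at hmul
      exact hmul
    have hconst := const_of_deriv_zero hK hz (I_mem_ball n)
    -- f z * exp (-(G n z)) = f I * exp (-(G n I))
    have hfI := hnz Complex.I hIUHP
    have hexplog : Complex.exp (Complex.log (f Complex.I)) = f Complex.I := Complex.exp_log hfI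
    have e1 : Complex.exp (L n z)
        = Complex.exp (G n z) * (Complex.exp (G n Complex.I))⁻¹ * f Complex.I := by
      rw [hL]
      simp only []
      rw [Complex.exp_add, Complex.exp_sub, hexplog]
      ring
    rw [Complex.exp_neg, Complex.exp_neg] at hconst
    have hEz : Complex.exp (G n z) ≠ 0 := Complex.exp_ne_zero _
    have hEI : Complex.exp (G n Complex.I) ≠ 0 := Complex.exp_ne_zero _
    rw [e1]
    field_simp at hconst ⊢
    linear_combination -hconst
  -- uniqueness of the normalized logs on overlaps
  have huniq : ∀ a b : ℕ, a ≤ b → ∀ z ∈ ball (cB a) (rB a), L a z = L b z := by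
    intro a b hab z hz
    have hsub := ball_mono_UHP hab
    have hderiv0 : ∀ x ∈ ball (cB a) (rB a),
        HasDerivAt (fun y => L a y - L b y) 0 x := by
      intro x hx
      simpa using (hLderiv a x hx).fun_sub (hLderiv b x (hsub hx))
    have hc := const_of_deriv_zero hderiv0 hz (I_mem_ball a)
    have hI0 : L a Complex.I - L b Complex.I = 0 := by rw [hL]; simp
    have : L a z - L b z = 0 := by rw [hc, hI0]
    exact sub_eq_zero.mp this
  -- glue
  refine ⟨fun z => if hex : ∃ n, z ∈ ball (cB n) (rB n) then L (Nat.find hex) z else 0, ?_, ?_⟩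
  all_goals {
    have hkey : ∀ n, ∀ z ∈ ball (cB n) (rB n),
        (fun z => if hex : ∃ n, z ∈ ball (cB n) (rB n) then L (Nat.find hex) z else 0) z
        = L n z := by
      intro n z hzb
      have hex : ∃ k, z ∈ ball (cB k) (rB k) := ⟨n, hzb⟩
      simp only [dif_pos hex]
      have hm : z ∈ ball (cB (Nat.find hex)) (rB (Nat.find hex)) := Nat.find_spec hex
      rcases le_total (Nat.find hex) n with hmn | hnm
      · exact huniq _ n hmn z hm
      · exact (huniq n _ hnm z hzb).symm
    intro z hz
    obtain ⟨n, hzb⟩ := exists_ball_UHP hz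
    have hev : (fun z => if hex : ∃ n, z ∈ ball (cB n) (rB n) then L (Nat.find hex) z else 0)
        =ᶠ[nhds z] L n :=
      Filter.eventuallyEq_of_mem (isOpen_ball.mem_nhds hzb) (fun x hx => hkey n x hx)
    first
    | exact ((hLderiv n z hzb).congr_of_eventuallyEq hev).differentiableAt
    | { rw [hkey n z hzb]; exact hLexp n z hzb }
  }

lemma abs_sub_lt_abs_sub_conj {ζ w : ℂ} (hζ : 0 < ζ.im) (hw : 0 < w.im) :
    ‖(ζ - w)‖ < ‖(ζ - (starRingEnd ℂ) w)‖ := by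
  rw [Complex.norm_def, Complex.norm_def]
  apply Real.sqrt_lt_sqrt (Complex.normSq_nonneg _)
  simp only [Complex.normSq_apply, Complex.sub_re, Complex.sub_im, Complex.conj_re,
    Complex.conj_im]
  nlinarith [mul_pos hζ hw]

lemma sub_conj_ne_zero {ζ w : ℂ} (hζ : 0 < ζ.im) (hw : 0 < w.im) :
    ζ - (starRingEnd ℂ) w ≠ 0 := by
  intro h
  have h2 : (ζ - (starRingEnd ℂ) w).im = 0 := by rw [h]; simp
  rw [Complex.sub_im, Complex.conj_im] at h2
  linarith

lemma abs_sub_conj_pos {ζ w : ℂ} (hζ : 0 < ζ.im) (hw : 0 < w.im) :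
    0 < ‖(ζ - (starRingEnd ℂ) w)‖ :=
  norm_pos_iff.mpr (sub_conj_ne_zero hζ hw)

lemma schwarz_pick_ratio {F : ℂ → ℂ} (hd : DifferentiableOn ℂ F UHP) (hm : MapsTo F UHP UHP)
    {z w : ℂ} (hz : 0 < z.im) (hw : 0 < w.im) :
    ‖(F z - F w)‖ / ‖(F z - (starRingEnd ℂ) (F w))‖
      ≤ ‖(z - w)‖ / ‖(z - (starRingEnd ℂ) w)‖ := by
  have hzU : z ∈ UHP := hz
  have hwU : w ∈ UHP := hw
  have hFw : 0 < (F w).im := hm hwU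
  have hFz : 0 < (F z).im := hm hzU
  set φ : ℂ → ℂ := fun ζ => (ζ - w) / (ζ - (starRingEnd ℂ) w) with hφ
  set φinv : ℂ → ℂ := fun u => (w - u * (starRingEnd ℂ) w) / (1 - u) with hφinv
  set ψ : ℂ → ℂ := fun ξ => (ξ - F w) / (ξ - (starRingEnd ℂ) (F w)) with hψ
  -- φ maps UHP to the unit ball
  have hφmem : ∀ ζ : ℂ, 0 < ζ.im → φ ζ ∈ ball (0 : ℂ) 1 := by
    intro ζ hζ
    rw [mem_ball_zero_iff]
    show ‖(ζ - w) / (ζ - (starRingEnd ℂ) w)‖ < 1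
    rw [norm_div,
      div_lt_one (abs_sub_conj_pos hζ hw)]
    exact abs_sub_lt_abs_sub_conj hζ hw
  have hψmem : ∀ ξ : ℂ, 0 < ξ.im → ψ ξ ∈ ball (0 : ℂ) 1 := by
    intro ξ hξ
    rw [mem_ball_zero_iff]
    show ‖(ξ - F w) / (ξ - (starRingEnd ℂ) (F w))‖ < 1
    rw [norm_div,
      div_lt_one (abs_sub_conj_pos hξ hFw)]
    exact abs_sub_lt_abs_sub_conj hξ hFw
  -- φinv maps the unit ball to UHP
  have hφinvmem : ∀ u ∈ ball (0 : ℂ) 1, (φinv u) ∈ UHP := by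
    intro u hu
    have habs : ‖u‖ < 1 := mem_ball_zero_iff.1 hu
    have hu1 : (1 : ℂ) - u ≠ 0 := by
      intro h
      have : u = 1 := by linear_combination -h
      rw [this] at habs; simp at habs
    have hnsq : 0 < Complex.normSq (1 - u) := Complex.normSq_pos.2 hu1
    have hns : Complex.normSq u < 1 := by
      rw [Complex.normSq_eq_norm_sq]; nlinarith [norm_nonneg u]
    show 0 < (φinv u).im
    have him : (φinv u).im = w.im * (1 - Complex.normSq u) / Complex.normSq (1 - u) := by
      rw [hφinv]
      simp only []
      rw [Complex.div_im, ← sub_div]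
      congr 1
      simp only [Complex.sub_re, Complex.sub_im, Complex.mul_re, Complex.mul_im,
        Complex.conj_re, Complex.conj_im, Complex.one_re, Complex.one_im,
        Complex.normSq_apply]
      ring
    rw [him]
    exact div_pos (mul_pos hw (by linarith)) hnsq
  -- φinv ∘ φ = id on UHP
  have hφinvφ : ∀ ζ : ℂ, 0 < ζ.im → φinv (φ ζ) = ζ := by
    intro ζ hζ
    have hden : ζ - (starRingEnd ℂ) w ≠ 0 := sub_conj_ne_zero hζ hw
    have hww : w - (starRingEnd ℂ) w ≠ 0 := by
      intro h
      have h2 : (w - (starRingEnd ℂ) w).im = 0 := by rw [h]; simp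
      rw [Complex.sub_im, Complex.conj_im] at h2
      linarith
    have h1 : (1 : ℂ) - φ ζ = (w - (starRingEnd ℂ) w) / (ζ - (starRingEnd ℂ) w) := by
      rw [hφ]
      simp only []
      field_simp
      ring
    have h2 : (1:ℂ) - φ ζ ≠ 0 := by
      rw [h1]
      exact div_ne_zero hww hden
    rw [hφinv]
    simp only []
    rw [div_eq_iff h2, hφ]
    simp only []
    field_simp
    ring
  set k : ℂ → ℂ := fun u => ψ (F (φinv u)) with hk
  have hφinv_diff : DifferentiableOn ℂ φinv (ball (0:ℂ) 1) := by
    apply DifferentiableOn.div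
    · exact ((differentiable_const _).sub (differentiable_id.mul_const _)).differentiableOn
    · exact ((differentiable_const _).sub differentiable_id).differentiableOn
    · intro u hu
      have habs : ‖u‖ < 1 := mem_ball_zero_iff.1 hu
      intro h
      have h3 : u = 1 := by linear_combination -h
      rw [h3] at habs
      simp at habs
  have hψ_diff : DifferentiableOn ℂ ψ UHP := by
    apply DifferentiableOn.div
    · exact (differentiable_id.sub_const _).differentiableOn
    · exact (differentiable_id.sub_const _).differentiableOn
    · intro ξ hξ
      exact sub_conj_ne_zero hξ hFw
  have hk_diff : DifferentiableOn ℂ k (ball (0:ℂ) 1) := by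
    have hmid : DifferentiableOn ℂ (F ∘ φinv) (ball (0:ℂ) 1) :=
      hd.comp hφinv_diff (fun u hu => hφinvmem u hu)
    exact hψ_diff.comp hmid (fun u hu => hm (hφinvmem u hu))
  have hk_maps : MapsTo k (ball (0:ℂ) 1) (ball (0:ℂ) 1) := fun u hu =>
    hψmem _ (hm (hφinvmem u hu))
  have hk0 : k 0 = 0 := by
    have h0 : φinv 0 = w := by
      rw [hφinv]
      simp
    rw [hk]
    simp only []
    rw [h0, hψ]
    simp
  have happ := Complex.dist_le_dist_of_mapsTo_ball hk_diff
    (by rw [hk0]; exact hk_maps.mono_right ball_subset_closedBall) (hφmem z hz)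
  rw [hk0, dist_zero_right, dist_zero_right] at happ
  have hkφ : k (φ z) = ψ (F z) := by
    rw [hk]
    simp only []
    rw [hφinvφ z hz]
  rw [hkφ, hψ, hφ] at happ
  simp only [] at happ
  rw [norm_div, norm_div] at happ
  exact happ

/-- Distance version of Schwarz–Pick on the upper half plane. -/
lemma schwarz_pick_dist {F : ℂ → ℂ} (hd : DifferentiableOn ℂ F UHP) (hm : MapsTo F UHP UHP)
    (z w : UpperHalfPlane) (h1 : 0 < (F ↑z).im) (h2 : 0 < (F ↑w).im) :
    dist (UpperHalfPlane.mk (F ↑z) h1) (UpperHalfPlane.mk (F ↑w) h2) ≤ dist z w := by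
  have hz : 0 < (z:ℂ).im := z.2
  have hw : 0 < (w:ℂ).im := w.2
  set A := ‖(F ↑z - F ↑w)‖ with hA
  set B := ‖(F ↑z - (starRingEnd ℂ) (F ↑w))‖ with hB
  set a := ‖((z:ℂ) - (w:ℂ))‖ with ha
  set b := ‖((z:ℂ) - (starRingEnd ℂ) (w:ℂ))‖ with hb
  have hBpos : 0 < B := abs_sub_conj_pos h1 h2
  have hbpos : 0 < b := abs_sub_conj_pos hz hw
  have hA0 : 0 ≤ A := norm_nonneg _
  have ha0 : 0 ≤ a := norm_nonneg _
  have hratio := schwarz_pick_ratio hd hm hz hw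
  rw [← hA, ← hB, ← ha, ← hb] at hratio
  have hcross : A * b ≤ a * B := by
    rw [div_le_div_iff₀ hBpos hbpos] at hratio
    linarith
  have hBsq : B^2 = A^2 + 4 * (F ↑z).im * (F ↑w).im := by
    rw [hB, hA, Complex.sq_norm, Complex.sq_norm]
    simp only [Complex.normSq_apply, Complex.sub_re, Complex.sub_im, Complex.conj_re,
      Complex.conj_im]
    ring
  have hbsq : b^2 = a^2 + 4 * (z:ℂ).im * (w:ℂ).im := by
    rw [hb, ha, Complex.sq_norm, Complex.sq_norm]
    simp only [Complex.normSq_apply, Complex.sub_re, Complex.sub_im, Complex.conj_re,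
      Complex.conj_im]
    ring
  have hkey : A^2 * ((z:ℂ).im * (w:ℂ).im) ≤ a^2 * ((F ↑z).im * (F ↑w).im) := by
    have hsq : (A*b)^2 ≤ (a*B)^2 := by
      have h0 : 0 ≤ A * b := by positivity
      nlinarith
    nlinarith [hsq, hBsq, hbsq]
  have hsqrt : A * Real.sqrt ((z:ℂ).im * (w:ℂ).im) ≤ a * Real.sqrt ((F ↑z).im * (F ↑w).im) := by
    have h3 := Real.sqrt_le_sqrt hkey
    rwa [Real.sqrt_mul (sq_nonneg A), Real.sqrt_mul (sq_nonneg a),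
      Real.sqrt_sq hA0, Real.sqrt_sq ha0] at h3
  rw [UpperHalfPlane.dist_eq, UpperHalfPlane.dist_eq]
  have him1 : (UpperHalfPlane.mk (F ↑z) h1).im = (F ↑z).im := rfl
  have him2 : (UpperHalfPlane.mk (F ↑w) h2).im = (F ↑w).im := rfl
  have hcoe1 : ((UpperHalfPlane.mk (F ↑z) h1) : ℂ) = F ↑z := rfl
  have hcoe2 : ((UpperHalfPlane.mk (F ↑w) h2) : ℂ) = F ↑w := rfl
  rw [him1, him2, hcoe1, hcoe2]
  have hIIpos : 0 < (F ↑z).im * (F ↑w).im := mul_pos h1 h2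
  have hiipos : 0 < (z:ℂ).im * (w:ℂ).im := mul_pos hz hw
  have hdiv : dist (F ↑z) (F ↑w) / (2 * Real.sqrt ((F ↑z).im * (F ↑w).im))
      ≤ dist (z:ℂ) (w:ℂ) / (2 * Real.sqrt ((z:ℂ).im * (w:ℂ).im)) := by
    rw [Complex.dist_eq, Complex.dist_eq, ← hA, ← ha]
    rw [div_le_div_iff₀ (by positivity) (by positivity)]
    have hs1 : 0 < Real.sqrt ((F ↑z).im * (F ↑w).im) := Real.sqrt_pos.2 hIIpos
    have hs2 : 0 < Real.sqrt ((z:ℂ).im * (w:ℂ).im) := Real.sqrt_pos.2 hiipos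
    nlinarith [hsqrt]
  have harsinh := Real.arsinh_le_arsinh.mpr hdiv
  have hzim : (z:ℂ).im = z.im := UpperHalfPlane.coe_im z
  have hwim : (w:ℂ).im = w.im := UpperHalfPlane.coe_im w
  rw [hzim, hwim] at harsinh
  linarith

/-- Key estimate: for a holomorphic `P` on the upper half-plane with `0 < |P| < R`,
the map `z ↦ log log (R/|P z|)` is 1-Lipschitz w.r.t. the hyperbolic metric. -/
lemma key_estimate {P : ℂ → ℂ} {R : ℝ} (hd : DifferentiableOn ℂ P UHP)
    (hb : ∀ ζ ∈ UHP, 0 < ‖(P ζ)‖ ∧ ‖(P ζ)‖ < R)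
    (z w : UpperHalfPlane) :
    |Real.log (Real.log (R / ‖(P ↑z)‖)) -
      Real.log (Real.log (R / ‖(P ↑w)‖))| ≤ dist z w := by
  have hIU : Complex.I ∈ UHP := by
    show (0:ℝ) < Complex.I.im
    simp
  have hR : 0 < R := lt_trans (hb _ hIU).1 (hb _ hIU).2
  have hRC : (R:ℂ) ≠ 0 := by
    simpa using hR.ne'
  set f : ℂ → ℂ := fun ζ => P ζ / (R:ℂ) with hf
  have hfd : DifferentiableOn ℂ f UHP := hd.div_const _
  have hfnz : ∀ ζ ∈ UHP, f ζ ≠ 0 := by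
    intro ζ hζ
    exact div_ne_zero (norm_pos_iff.mp (hb ζ hζ).1) hRC
  obtain ⟨g, hgdiff, hgexp⟩ := exists_log_UHP hfd hfnz
  have hre : ∀ ζ ∈ UHP, (g ζ).re = Real.log (‖(P ζ)‖ / R) := by
    intro ζ hζ
    have h1 : ‖(Complex.exp (g ζ))‖ = ‖(P ζ)‖ / R := by
      rw [hgexp ζ hζ, hf]
      simp only []
      rw [norm_div, Complex.norm_real, Real.norm_eq_abs, abs_of_pos hR]
    rw [Complex.norm_exp] at h1
    have h2 := congrArg Real.log h1
    rwa [Real.log_exp] at h2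
  set F : ℂ → ℂ := fun ζ => Complex.I * (-(g ζ)) with hF
  have hFim : ∀ ζ ∈ UHP, (F ζ).im = Real.log (R / ‖(P ζ)‖) := by
    intro ζ hζ
    rw [hF]
    simp only []
    rw [Complex.mul_im]
    simp only [Complex.I_re, Complex.I_im, Complex.neg_re, zero_mul, one_mul, zero_add]
    rw [hre ζ hζ, ← Real.log_inv, inv_div]
  have hFpos : ∀ ζ ∈ UHP, 0 < (F ζ).im := by
    intro ζ hζ
    rw [hFim ζ hζ]
    apply Real.log_pos
    rw [lt_div_iff₀ (hb ζ hζ).1, one_mul]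
    exact (hb ζ hζ).2
  have hFd : DifferentiableOn ℂ F UHP := by
    intro ζ hζ
    exact (((hgdiff ζ hζ).neg).const_mul Complex.I).differentiableWithinAt
  have hm : MapsTo F UHP UHP := fun ζ hζ => hFpos ζ hζ
  have hzU : (z:ℂ) ∈ UHP := z.2
  have hwU : (w:ℂ) ∈ UHP := w.2
  have hsp := schwarz_pick_dist hFd hm z w (hFpos _ hzU) (hFpos _ hwU)
  set Z := UpperHalfPlane.mk (F ↑z) (hFpos _ hzU) with hZ
  set W := UpperHalfPlane.mk (F ↑w) (hFpos _ hwU) with hW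
  have hZim : Z.im = Real.log (R / ‖(P ↑z)‖) := hFim _ hzU
  have hWim : W.im = Real.log (R / ‖(P ↑w)‖) := hFim _ hwU
  have hla : 0 < Z.im := hFpos _ hzU
  have hlb : 0 < W.im := hFpos _ hwU
  have h1 := UpperHalfPlane.im_le_im_mul_exp_dist Z W
  have h2 := UpperHalfPlane.im_le_im_mul_exp_dist W Z
  rw [dist_comm] at h2
  have e1 : Real.log Z.im ≤ Real.log W.im + dist Z W := by
    calc Real.log Z.im ≤ Real.log (W.im * Real.exp (dist Z W)) :=
          Real.log_le_log hla h1
    _ = Real.log W.im + dist Z W := by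
          rw [Real.log_mul hlb.ne' (Real.exp_pos _).ne', Real.log_exp]
  have e2 : Real.log W.im ≤ Real.log Z.im + dist Z W := by
    calc Real.log W.im ≤ Real.log (Z.im * Real.exp (dist Z W)) :=
          Real.log_le_log hlb h2
    _ = Real.log Z.im + dist Z W := by
          rw [Real.log_mul hla.ne' (Real.exp_pos _).ne', Real.log_exp]
  have habs : |Real.log Z.im - Real.log W.im| ≤ dist Z W :=
    abs_sub_le_iff.2 ⟨by linarith, by linarith⟩
  rw [hZim, hWim] at habs
  exact le_trans habs hsp

/-- Covering a real interval by `N` sets of diameter at most `d`. -/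
lemma chain_bound {N : ℕ} {A : Fin N → Set ℝ} {a b d : ℝ} (hd : 0 ≤ d)
    (hsub : Ioo a b ⊆ ⋃ i, A i) (hA : ∀ i, ∀ x ∈ A i, ∀ y ∈ A i, |x - y| ≤ d) :
    b - a ≤ N * d := by
  have hND : (0:ℝ) ≤ N * d := by positivity
  rcases le_or_gt b a with hab | hab
  · linarith
  have h1 : ENNReal.ofReal (b - a) = MeasureTheory.volume (Ioo a b) := by
    rw [Real.volume_Ioo]
  have h2 : MeasureTheory.volume (Ioo a b) ≤ ∑' i : Fin N, MeasureTheory.volume (A i) :=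
    le_trans (MeasureTheory.measure_mono hsub) (MeasureTheory.measure_iUnion_le A)
  have h3 : ∀ i, MeasureTheory.volume (A i) ≤ ENNReal.ofReal d := by
    intro i
    refine le_trans (Real.volume_le_diam (A i)) ?_
    refine EMetric.diam_le ?_
    intro x hx y hy
    rw [edist_dist, Real.dist_eq]
    exact ENNReal.ofReal_le_ofReal (hA i x hx y hy)
  have h4 : (∑' i : Fin N, MeasureTheory.volume (A i)) ≤ (N : ℝ≥0∞) * ENNReal.ofReal d := by
    rw [tsum_fintype]
    calc ∑ i : Fin N, MeasureTheory.volume (A i) ≤ ∑ _i : Fin N, ENNReal.ofReal d :=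
          Finset.sum_le_sum fun i _ => h3 i
    _ = (N : ℝ≥0∞) * ENNReal.ofReal d := by
          rw [Finset.sum_const, Finset.card_univ, Fintype.card_fin, nsmul_eq_mul]
  have h5 : (N : ℝ≥0∞) * ENNReal.ofReal d = ENNReal.ofReal (N * d) := by
    rw [ENNReal.ofReal_mul (by positivity : (0:ℝ) ≤ (N:ℝ))]
    congr 1
    exact (ENNReal.ofReal_natCast N).symm
  have h6 : ENNReal.ofReal (b - a) ≤ ENNReal.ofReal (N * d) := by
    rw [h1, ← h5]
    exact le_trans h2 h4
  rwa [ENNReal.ofReal_le_ofReal_iff hND] at h6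

/-- `NbhdOne` is the union of unit balls centered on `(0,1)`. -/
lemma NbhdOne_eq : NbhdOne = ⋃ t ∈ Ioo (0:ℝ) 1, ball ((t:ℝ):ℂ) 1 := by
  ext z
  simp only [NbhdOne, mem_setOf_eq, mem_iUnion, mem_ball, exists_prop]

lemma isOpen_NbhdOne : IsOpen NbhdOne := by
  rw [NbhdOne_eq]
  exact isOpen_biUnion fun t _ => isOpen_ball

lemma coe_mem_NbhdOne {t : ℝ} (ht : t ∈ Ioo (0:ℝ) 1) : ((t:ℝ):ℂ) ∈ NbhdOne :=
  ⟨t, ht, by simp⟩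

lemma isPreconnected_NbhdOne : IsPreconnected NbhdOne := by
  rw [NbhdOne_eq]
  have : (⋃ t ∈ Ioo (0:ℝ) 1, ball ((t:ℝ):ℂ) 1)
      = ⋃₀ ((fun t : ℝ => ball ((t:ℝ):ℂ) 1) '' (Ioo 0 1)) := by
    rw [sUnion_image]
  rw [this]
  apply isPreconnected_sUnion ((1/2 : ℝ) : ℂ)
  · rintro s ⟨t, ht, rfl⟩
    rw [mem_ball]
    have h1 : dist (((1/2:ℝ)):ℂ) ((t:ℝ):ℂ) = |1/2 - t| := by
      rw [Complex.dist_eq]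
      rw [← Complex.ofReal_sub, Complex.norm_real, Real.norm_eq_abs]
    rw [h1]
    rw [abs_sub_lt_iff]
    exact ⟨by linarith [ht.1, ht.2], by linarith [ht.1, ht.2]⟩
  · rintro s ⟨t, ht, rfl⟩
    exact (convex_ball _ _).isPreconnected

lemma ball_half_subset_NbhdOne : ball ((1/2 : ℝ) : ℂ) 1 ⊆ NbhdOne := by
  intro z hz
  rw [mem_ball] at hz
  have hdist : ∀ t : ℝ, (dist z ((t:ℝ):ℂ))^2 = (z.re - t)^2 + z.im^2 := by
    intro t
    rw [Complex.dist_eq, Complex.sq_norm, Complex.normSq_apply]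
    simp [Complex.sub_re, Complex.sub_im]
    ring
  have hd2 : (z.re - 1/2)^2 + z.im^2 < 1 := by
    have := hdist (1/2)
    nlinarith [dist_nonneg (x := z) (y := (((1/2:ℝ)):ℂ)), hz]
  rcases le_or_gt z.re (1/4) with hre | hre
  · -- use |z| < 1, pick t small
    have habs : ‖z‖ < 1 := by
      have h1 : (‖z‖)^2 = z.re^2 + z.im^2 := by
        rw [Complex.sq_norm, Complex.normSq_apply]; ring
      nlinarith [norm_nonneg z]
    set t : ℝ := (1 - ‖z‖)/2 with htdef
    have ht : t ∈ Ioo (0:ℝ) 1 := by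
      constructor
      · simp only [htdef]; linarith
      · simp only [htdef]; linarith [norm_nonneg z]
    refine ⟨t, ht, ?_⟩
    calc dist z ((t:ℝ):ℂ) ≤ dist z 0 + dist (0:ℂ) ((t:ℝ):ℂ) := dist_triangle _ _ _
    _ = ‖z‖ + t := by
        rw [Complex.dist_eq, Complex.dist_eq]
        simp only [Complex.norm_real, Real.norm_eq_abs, sub_zero, zero_sub, norm_neg]
        rw [_root_.abs_of_nonneg ht.1.le]
    _ < 1 := by simp only [htdef]; linarith
  rcases lt_or_ge z.re (3/4) with hre2 | hre2
  · -- middle: t := z.re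
    have ht : z.re ∈ Ioo (0:ℝ) 1 := ⟨by linarith, by linarith⟩
    refine ⟨z.re, ht, ?_⟩
    have h1 : (dist z ((z.re:ℝ):ℂ))^2 = z.im^2 := by rw [hdist]; ring_nf
    have h2 : (dist z ((z.re:ℝ):ℂ))^2 < 1 := by nlinarith
    nlinarith [dist_nonneg (x := z) (y := ((z.re:ℝ):ℂ))]
  · -- right: |z - 1| < 1, pick t close to 1
    have habs : ‖(z - 1)‖ < 1 := by
      have h1 : (‖(z - 1)‖)^2 = (z.re - 1)^2 + z.im^2 := by
        rw [Complex.sq_norm, Complex.normSq_apply]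
        simp [Complex.sub_re, Complex.sub_im]
        ring
      nlinarith [norm_nonneg (z - 1)]
    set s : ℝ := (1 - ‖(z - 1)‖)/2 with hsdef
    have hs0 : 0 < s := by simp only [hsdef]; linarith
    have hs1 : s ≤ 1/2 := by simp only [hsdef]; linarith [norm_nonneg (z-1)]
    have ht : (1 - s) ∈ Ioo (0:ℝ) 1 := ⟨by linarith, by linarith⟩
    refine ⟨1 - s, ht, ?_⟩
    calc dist z (((1 - s:ℝ)):ℂ) ≤ dist z 1 + dist (1:ℂ) (((1 - s:ℝ)):ℂ) := dist_triangle _ _ _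
    _ = ‖(z - 1)‖ + s := by
        rw [Complex.dist_eq, Complex.dist_eq]
        congr 1
        have : (1:ℂ) - ((1 - s:ℝ):ℂ) = ((s:ℝ):ℂ) := by push_cast; ring
        rw [this, Complex.norm_real, Real.norm_eq_abs, _root_.abs_of_nonneg hs0.le]
    _ < 1 := by simp only [hsdef]; linarith

lemma arsinh_four_le : Real.arsinh 4 ≤ 5/2 := by
  rw [← Real.arsinh_sinh (5/2), Real.arsinh_le_arsinh, Real.sinh_eq]
  have e1 : (2.7:ℝ) ≤ Real.exp 1 := by linarith [Real.exp_one_gt_d9]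
  have e2 : (1.5:ℝ) ≤ Real.exp (1/2) := by linarith [Real.add_one_le_exp (1/2:ℝ)]
  have e3 : Real.exp (5/2:ℝ) = Real.exp 1 * Real.exp 1 * Real.exp (1/2) := by
    rw [← Real.exp_add, ← Real.exp_add]; norm_num
  have e4 : (10:ℝ) ≤ Real.exp (5/2) := by
    rw [e3]
    nlinarith [Real.exp_pos (1:ℝ), Real.exp_pos (1/2:ℝ)]
  have e5 : Real.exp (-(5/2):ℝ) ≤ 1 := by
    rw [Real.exp_le_one_iff]; norm_num
  linarith

lemma loglog3_le : Real.log (Real.log 3) ≤ 2/5 := by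
  have e1 : (2.7:ℝ) ≤ Real.exp 1 := by linarith [Real.exp_one_gt_d9]
  have e2 : (1.4:ℝ) ≤ Real.exp (2/5) := by linarith [Real.add_one_le_exp (2/5:ℝ)]
  have hlog3 : Real.log 3 ≤ 1.4 := by
    have h1 : (3:ℝ) ≤ Real.exp (1.4:ℝ) := by
      have e3 : Real.exp (1.4:ℝ) = Real.exp 1 * Real.exp (2/5) := by
        rw [← Real.exp_add]; norm_num
      rw [e3]
      nlinarith [Real.exp_pos (2/5:ℝ)]
    calc Real.log 3 ≤ Real.log (Real.exp 1.4) := Real.log_le_log (by norm_num) h1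
    _ = 1.4 := Real.log_exp _
  have hpos : 0 < Real.log 3 := Real.log_pos (by norm_num)
  calc Real.log (Real.log 3) ≤ Real.log (Real.exp (2/5)) :=
        Real.log_le_log hpos (le_trans hlog3 e2)
  _ = 2/5 := Real.log_exp _

lemma a_bounds {t : ℝ} (ht : t ∈ Ioo (0:ℝ) 1) :
    (2*t+1)/(3-2*t) ∈ Ioo (1/3:ℝ) 3 := by
  have hden : (0:ℝ) < 3 - 2*t := by linarith [ht.2]
  constructor
  · rw [lt_div_iff₀ hden]; linarith [ht.1]
  · rw [div_lt_iff₀ hden]; linarith [ht.2]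

lemma im_I_mul (r : ℝ) : (Complex.I * (r:ℂ)).im = r := by
  simp [Complex.mul_im]

/-- Hyperbolic distance bound between points `i·a`, `i·b` with `a, b ∈ (1/3, 3)`. -/
lemma dist_I_mul_le {a b : ℝ} (ha : a ∈ Ioo (1/3:ℝ) 3) (hb : b ∈ Ioo (1/3:ℝ) 3)
    (h1 : 0 < (Complex.I * (a:ℂ)).im) (h2 : 0 < (Complex.I * (b:ℂ)).im) :
    dist (UpperHalfPlane.mk (Complex.I * (a:ℂ)) h1) (UpperHalfPlane.mk (Complex.I * (b:ℂ)) h2)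
      ≤ 5 := by
  rw [UpperHalfPlane.dist_eq]
  have hdistc : dist (Complex.I * (a:ℂ)) (Complex.I * (b:ℂ)) = |a - b| := by
    rw [Complex.dist_eq]
    have : Complex.I * (a:ℂ) - Complex.I * (b:ℂ) = Complex.I * (((a - b:ℝ)):ℂ) := by
      push_cast; ring
    rw [this, norm_mul, Complex.norm_I, one_mul, Complex.norm_real, Real.norm_eq_abs]
  have him1 : (UpperHalfPlane.mk (Complex.I * (a:ℂ)) h1).im = a := im_I_mul a
  have him2 : (UpperHalfPlane.mk (Complex.I * (b:ℂ)) h2).im = b := im_I_mul b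
  have hcoe1 : ((UpperHalfPlane.mk (Complex.I * (a:ℂ)) h1) : ℂ) = Complex.I * (a:ℂ) := rfl
  have hcoe2 : ((UpperHalfPlane.mk (Complex.I * (b:ℂ)) h2) : ℂ) = Complex.I * (b:ℂ) := rfl
  rw [him1, him2, hcoe1, hcoe2, hdistc]
  have hab : (1:ℝ)/9 < a * b := by nlinarith [ha.1, ha.2, hb.1, hb.2]
  have hsq : (1:ℝ)/3 ≤ Real.sqrt (a * b) := by
    rw [show (1:ℝ)/3 = Real.sqrt ((1/3)^2) by rw [Real.sqrt_sq (by norm_num)]]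
    apply Real.sqrt_le_sqrt
    nlinarith
  have hnum : |a - b| ≤ 8/3 := by
    rw [abs_le]
    constructor <;> nlinarith [ha.1, ha.2, hb.1, hb.2]
  have hratio : |a - b| / (2 * Real.sqrt (a * b)) ≤ 4 := by
    rw [div_le_iff₀ (by positivity)]
    calc |a - b| ≤ 8/3 := hnum
    _ ≤ 4 * (2 * (1/3)) := by norm_num
    _ ≤ 4 * (2 * Real.sqrt (a * b)) := by linarith [hsq]
  calc 2 * Real.arsinh (|a - b| / (2 * Real.sqrt (a * b)))
      ≤ 2 * Real.arsinh 4 := by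
        have := Real.arsinh_le_arsinh.mpr hratio
        linarith
  _ ≤ 5 := by linarith [arsinh_four_le]

def Wmap : ℂ → ℂ := fun ζ => (1/2 : ℂ) + (ζ - Complex.I)/(ζ + Complex.I)

lemma I_im_pos : (0:ℝ) < Complex.I.im := by simp

lemma add_I_ne_zero {ζ : ℂ} (hζ : 0 < ζ.im) : ζ + Complex.I ≠ 0 := by
  have h := sub_conj_ne_zero hζ I_im_pos
  rwa [Complex.conj_I, sub_neg_eq_add] at h

lemma Wmap_diff : DifferentiableOn ℂ Wmap UHP := by
  apply DifferentiableOn.add (differentiableOn_const _)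
  apply DifferentiableOn.div
  · exact (differentiable_id.sub_const _).differentiableOn
  · exact (differentiable_id.add_const _).differentiableOn
  · intro ζ hζ
    exact add_I_ne_zero hζ

lemma Wmap_mem : ∀ ζ ∈ UHP, Wmap ζ ∈ ball (((1/2:ℝ)):ℂ) 1 := by
  intro ζ hζ
  rw [mem_ball]
  have h1 : Wmap ζ - ((1/2:ℝ):ℂ) = (ζ - Complex.I)/(ζ + Complex.I) := by
    unfold Wmap
    push_cast
    ring
  rw [Complex.dist_eq, h1, norm_div,
    div_lt_one (norm_pos_iff.mpr (add_I_ne_zero hζ))]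
  have h2 := abs_sub_lt_abs_sub_conj hζ I_im_pos
  rwa [Complex.conj_I, sub_neg_eq_add] at h2

lemma Wmap_I_mul {t : ℝ} (ht : t ∈ Ioo (0:ℝ) 1) :
    Wmap (Complex.I * ((((2*t+1)/(3-2*t) : ℝ)):ℂ)) = ((t:ℝ):ℂ) := by
  have hden : (3:ℝ) - 2*t ≠ 0 := by
    have := ht.2
    intro h
    linarith
  have hdenC : ((3:ℂ) - 2*(t:ℂ)) ≠ 0 := by
    intro h
    apply hden
    have := congrArg Complex.re h
    simpa using this
  have hapos : (0:ℝ) < (2*t+1)/(3-2*t) := lt_trans (by norm_num) (a_bounds ht).1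
  have hAden : Complex.I * ((((2*t+1)/(3-2*t) : ℝ)):ℂ) + Complex.I ≠ 0 := by
    have h4 : Complex.I * ((((2*t+1)/(3-2*t) : ℝ)):ℂ) + Complex.I
        = Complex.I * ((((2*t+1)/(3-2*t) + 1 : ℝ)):ℂ) := by
      push_cast
      ring
    rw [h4]
    apply mul_ne_zero Complex.I_ne_zero
    rw [Complex.ofReal_ne_zero]
    linarith
  unfold Wmap
  rw [show ((((2*t+1)/(3-2*t) : ℝ)):ℂ) = ((2*(t:ℂ)+1)/(3-2*(t:ℂ))) by push_cast; ring]
    at hAden ⊢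
  field_simp [hdenC] at hAden ⊢
  ring_nf

end CCLB

/-- Any covering of the segment `(ε,1)` by `N` sets of hyperbolic diameter at
most `D` in the annulus `A(ε/2,2)` requires `N ≥ c·log|log ε|/D`; consequently
the number of maps `(0,1) → X_ε` of bounded `ω`-norm (holomorphic extension to
the `1`-neighborhood, bounded by `2`) needed to cover `X_ε` is at least
proportional to `log |log ε|` as `ε → 0`. -/
theorem covering_count_lower_bound :
    ∃ c : ℝ, 0 < c ∧ ∃ C : ℝ, 0 < C ∧ ∃ ε₀ : ℝ, 0 < ε₀ ∧ ε₀ < 1 ∧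
      ∀ ε : ℝ, ε ∈ Set.Ioo 0 ε₀ →
        ∀ p : UpperHalfPlane → ℂ,
          IsHolomorphicCoveringOnto p (Annulus (ε / 2) 2) →
          ((∀ D : ℝ, 0 < D → ∀ N : ℕ, ∀ U : Fin N → Set ℂ,
              ((fun t : ℝ => (t : ℂ)) '' Set.Ioo ε 1 ⊆ ⋃ i, U i) →
              (∀ i, ∀ x ∈ U i, ∀ y ∈ U i, hypDist p x y ≤ D) →
              c * Real.log |Real.log ε| / D ≤ (N : ℝ)) ∧
           (∀ N : ℕ, ∀ F : Fin N → ℂ → ℂ × ℂ,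
              (∀ i, DifferentiableOn ℂ (F i) NbhdOne ∧
                (∀ z ∈ NbhdOne,
                  ‖((F i) z).1‖ ≤ 2 ∧ ‖((F i) z).2‖ ≤ 2) ∧
                (∀ t : ℝ, t ∈ Set.Ioo (0:ℝ) 1 → F i (t : ℂ) ∈ Xe ε)) →
              (Xe ε ⊆ ⋃ i, F i '' ((fun t : ℝ => (t : ℂ)) '' Set.Ioo (0:ℝ) 1)) →
              c * Real.log |Real.log ε| / C ≤ (N : ℝ))) := by
  have hε₀lt1 : Real.exp (-Real.exp 1) < 1 := by
    calc Real.exp (-Real.exp 1) < Real.exp 0 :=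
          Real.exp_lt_exp.mpr (by linarith [Real.exp_pos 1])
    _ = 1 := Real.exp_zero
  refine ⟨1/2, by norm_num, 10, by norm_num, Real.exp (-Real.exp 1), Real.exp_pos _,
    hε₀lt1, ?_⟩
  intro ε hε p hcover
  obtain ⟨hεpos, hεlt⟩ := hε
  obtain ⟨hmem, hsurj, ⟨P₀, hP₀diff, hP₀eq⟩, _hcovmap⟩ := hcover
  have hε1 : ε < 1 := lt_trans hεlt hε₀lt1
  have hlogε : Real.log ε < -Real.exp 1 := by
    have h := Real.log_lt_log hεpos hεlt
    rwa [Real.log_exp] at h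
  have he1 : (1:ℝ) < Real.exp 1 := by linarith [Real.exp_one_gt_d9]
  have habsl : |Real.log ε| = -Real.log ε := abs_of_neg (by linarith)
  have hL1 : 1 ≤ Real.log |Real.log ε| := by
    rw [habsl]
    calc (1:ℝ) = Real.log (Real.exp 1) := (Real.log_exp 1).symm
    _ ≤ Real.log (-Real.log ε) := Real.log_le_log (Real.exp_pos 1) (by linarith)
  have hP₀diffU : DifferentiableOn ℂ P₀ UHP := hP₀diff
  have hP₀b : ∀ ζ ∈ UHP, 0 < ‖(P₀ ζ)‖ ∧ ‖(P₀ ζ)‖ < 2 := by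
    intro ζ hζ
    have hζ' : 0 < ζ.im := hζ
    have h1 : P₀ ζ = p (UpperHalfPlane.mk ζ hζ') := hP₀eq (UpperHalfPlane.mk ζ hζ')
    rw [h1]
    have h2 := hmem (UpperHalfPlane.mk ζ hζ')
    exact ⟨lt_trans (by linarith : (0:ℝ) < ε/2) h2.1, h2.2⟩
  constructor
  · -- first bullet
    intro D hD N U hcoverU hdiam
    set φ : ℝ → ℝ := fun x => Real.log (Real.log (2 / x)) with hφdef
    have hcont : ContinuousOn φ (Icc ε 1) := by
      apply ContinuousOn.log
      · apply ContinuousOn.log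
        · apply ContinuousOn.div continuousOn_const continuousOn_id
          intro x hx
          exact ne_of_gt (lt_of_lt_of_le hεpos hx.1)
        · intro x hx
          exact ne_of_gt (div_pos two_pos (lt_of_lt_of_le hεpos hx.1))
      · intro x hx
        apply ne_of_gt
        apply Real.log_pos
        rw [lt_div_iff₀ (lt_of_lt_of_le hεpos hx.1), one_mul]
        linarith [hx.2]
    have hyplb : ∀ t t' : ℝ, t ∈ Ioo ε 1 → t' ∈ Ioo ε 1 →
        |φ t - φ t'| ≤ hypDist p ((t:ℝ):ℂ) ((t':ℝ):ℂ) := by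
      intro t t' ht ht'
      have htpos : 0 < t := lt_trans hεpos ht.1
      have ht'pos : 0 < t' := lt_trans hεpos ht'.1
      have hmemt : ((t:ℝ):ℂ) ∈ Annulus (ε/2) 2 := by
        constructor
        · show ε / 2 < ‖((t:ℝ):ℂ)‖
          rw [Complex.norm_real, Real.norm_eq_abs, _root_.abs_of_pos htpos]
          linarith [ht.1]
        · show ‖((t:ℝ):ℂ)‖ < 2
          rw [Complex.norm_real, Real.norm_eq_abs, _root_.abs_of_pos htpos]
          linarith [ht.2]
      have hmemt' : ((t':ℝ):ℂ) ∈ Annulus (ε/2) 2 := by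
        constructor
        · show ε / 2 < ‖((t':ℝ):ℂ)‖
          rw [Complex.norm_real, Real.norm_eq_abs, _root_.abs_of_pos ht'pos]
          linarith [ht'.1]
        · show ‖((t':ℝ):ℂ)‖ < 2
          rw [Complex.norm_real, Real.norm_eq_abs, _root_.abs_of_pos ht'pos]
          linarith [ht'.2]
      obtain ⟨z, hz⟩ := hsurj ⟨_, hmemt⟩
      obtain ⟨w, hw⟩ := hsurj ⟨_, hmemt'⟩
      have hpz : p z = ((t:ℝ):ℂ) := by
        have h := congrArg Subtype.val hz
        simpa using h
      have hpw : p w = ((t':ℝ):ℂ) := by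
        have h := congrArg Subtype.val hw
        simpa using h
      have hne : {d | ∃ z w : UpperHalfPlane,
          p z = ((t:ℝ):ℂ) ∧ p w = ((t':ℝ):ℂ) ∧ d = dist z w}.Nonempty :=
        ⟨dist z w, z, w, hpz, hpw, rfl⟩
      apply le_csInf hne
      rintro d ⟨z', w', hz', hw', rfl⟩
      have hk := key_estimate (R := 2) hP₀diffU hP₀b z' w'
      rw [hP₀eq z', hP₀eq w', hz', hw', Complex.norm_real, Real.norm_eq_abs, Complex.norm_real, Real.norm_eq_abs,
        _root_.abs_of_pos htpos, _root_.abs_of_pos ht'pos] at hk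
      exact hk
    have hchain : φ ε - φ 1 ≤ N * D := by
      apply chain_bound hD.le
        (A := fun i => {v | ∃ t : ℝ, t ∈ Ioo ε 1 ∧ ((t:ℝ):ℂ) ∈ U i ∧ v = φ t})
      · intro v hv
        obtain ⟨t, ht, hvt⟩ := intermediate_value_Ioo' (le_of_lt hε1) hcont hv
        have hcov2 : ((t:ℝ):ℂ) ∈ ⋃ i, U i := hcoverU ⟨t, ht, rfl⟩
        obtain ⟨i, hi⟩ := mem_iUnion.mp hcov2
        exact mem_iUnion.mpr ⟨i, t, ht, hi, hvt.symm⟩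
      · rintro i v ⟨t, ht, htU, rfl⟩ v' ⟨t', ht', ht'U, rfl⟩
        exact le_trans (hyplb t t' ht ht') (hdiam i _ htU _ ht'U)
    have hφ1 : φ 1 < 0 := by
      simp only [hφdef, div_one]
      exact Real.log_neg (Real.log_pos one_lt_two) (by linarith [Real.log_two_lt_d9])
    have hφε : Real.log |Real.log ε| ≤ φ ε := by
      simp only [hφdef]
      rw [habsl]
      apply Real.log_le_log (by linarith)
      rw [Real.log_div two_ne_zero hεpos.ne']
      linarith [Real.log_pos one_lt_two]
    rw [div_le_iff₀ hD]
    have h0ND : (0:ℝ) ≤ (N:ℝ) * D := by positivity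
    linarith
  · -- second bullet
    intro N F hF hcoverX
    set φ : ℝ → ℝ := fun x => Real.log (Real.log (3 / x)) with hφdef
    have hcont : ContinuousOn φ (Icc ε 1) := by
      apply ContinuousOn.log
      · apply ContinuousOn.log
        · apply ContinuousOn.div continuousOn_const continuousOn_id
          intro x hx
          exact ne_of_gt (lt_of_lt_of_le hεpos hx.1)
        · intro x hx
          exact ne_of_gt (div_pos (by norm_num) (lt_of_lt_of_le hεpos hx.1))
      · intro x hx
        apply ne_of_gt
        apply Real.log_pos
        rw [lt_div_iff₀ (lt_of_lt_of_le hεpos hx.1), one_mul]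
        linarith [hx.2]
    have hkey : ∀ i : Fin N, ∀ t ∈ Ioo (0:ℝ) 1, ∀ t' ∈ Ioo (0:ℝ) 1,
        |φ (‖((F i ((t:ℝ):ℂ)).1)‖) - φ (‖((F i ((t':ℝ):ℂ)).1)‖)| ≤ 5 := by
      intro i t ht t' ht'
      obtain ⟨hdiffF, hboundF, hXeF⟩ := hF i
      have hGdiff : DifferentiableOn ℂ (fun ζ => (F i ζ).1) NbhdOne := hdiffF.fst
      have hHdiff : DifferentiableOn ℂ (fun ζ => (F i ζ).2) NbhdOne := hdiffF.snd
      have hhalf : ((1/2 : ℝ):ℂ) ∈ NbhdOne := coe_mem_NbhdOne (by norm_num)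
      have hprod : EqOn (fun ζ => (F i ζ).1 * (F i ζ).2) (fun _ => ((ε:ℝ):ℂ)) NbhdOne := by
        apply AnalyticOnNhd.eqOn_of_preconnected_of_frequently_eq
          ((hGdiff.mul hHdiff).analyticOnNhd isOpen_NbhdOne)
          (analyticOnNhd_const)
          isPreconnected_NbhdOne
          hhalf
        have hA : Filter.Tendsto (fun n : ℕ => ((n:ℝ)+3)) Filter.atTop Filter.atTop :=
          Filter.tendsto_atTop_add_const_right _ 3 tendsto_natCast_atTop_atTop
        have h0 : Filter.Tendsto (fun n : ℕ => ((n:ℝ)+3)⁻¹) Filter.atTop (nhds 0) :=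
          tendsto_inv_atTop_zero.comp hA
        have hseq : ∀ n : ℕ, (1/2 + ((n:ℝ)+3)⁻¹ : ℝ) ∈ Ioo (0:ℝ) 1 := by
          intro n
          constructor
          · positivity
          · have hn0 : (0:ℝ) ≤ (n:ℝ) := Nat.cast_nonneg n
            have h1 : ((n:ℝ)+3)⁻¹ ≤ (3:ℝ)⁻¹ :=
              inv_anti₀ (by norm_num) (by linarith)
            have h2 : (3:ℝ)⁻¹ ≤ 1/3 := by norm_num
            linarith
        have hu : Filter.Tendsto (fun n : ℕ => (((1/2 + ((n:ℝ)+3)⁻¹ : ℝ)):ℂ))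
            Filter.atTop (nhdsWithin (((1/2:ℝ)):ℂ) {(((1/2:ℝ)):ℂ)}ᶜ) := by
          apply tendsto_nhdsWithin_of_tendsto_nhds_of_eventually_within
          · have h2 : Filter.Tendsto (fun n : ℕ => (1/2 + ((n:ℝ)+3)⁻¹ : ℝ))
                Filter.atTop (nhds (1/2 : ℝ)) := by
              have h3 := Filter.Tendsto.const_add (1/2:ℝ) h0
              simpa using h3
            exact (Complex.continuous_ofReal.tendsto _).comp h2
          · apply Filter.Eventually.of_forall
            intro n
            simp only [mem_compl_iff, mem_singleton_iff]
            intro hcontra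
            have h4 : (1/2 + ((n:ℝ)+3)⁻¹ : ℝ) = 1/2 := by exact_mod_cast hcontra
            have hpos : (0:ℝ) < ((n:ℝ)+3)⁻¹ := by positivity
            linarith
        apply hu.frequently
        apply Filter.Frequently.of_forall
        intro n
        exact (hXeF _ (hseq n)).2.2.2.2
      have hPb : ∀ ζ ∈ UHP, 0 < ‖((F i (Wmap ζ)).1)‖
          ∧ ‖((F i (Wmap ζ)).1)‖ < 3 := by
        intro ζ hζ
        have hmemN : Wmap ζ ∈ NbhdOne := ball_half_subset_NbhdOne (Wmap_mem ζ hζ)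
        have hprodζ : (F i (Wmap ζ)).1 * (F i (Wmap ζ)).2 = ((ε:ℝ):ℂ) := hprod hmemN
        have habs2 : ‖((F i (Wmap ζ)).1)‖ * ‖((F i (Wmap ζ)).2)‖ = ε := by
          rw [← norm_mul, hprodζ, Complex.norm_real, Real.norm_eq_abs, _root_.abs_of_pos hεpos]
        have hb1 := (hboundF _ hmemN).1
        have hb2 := (hboundF _ hmemN).2
        constructor
        · by_contra hcon
          push_neg at hcon
          have h5 : ‖((F i (Wmap ζ)).1)‖ = 0 :=
            le_antisymm hcon (norm_nonneg _)
          rw [h5, zero_mul] at habs2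
          linarith
        · linarith
      have hPdiff : DifferentiableOn ℂ (fun ζ => (F i (Wmap ζ)).1) UHP :=
        hGdiff.comp Wmap_diff (fun ζ hζ => ball_half_subset_NbhdOne (Wmap_mem ζ hζ))
      have ha1 := a_bounds ht
      have ha2 := a_bounds ht'
      have him1 : 0 < (Complex.I * ((((2*t+1)/(3-2*t) : ℝ)):ℂ)).im := by
        rw [im_I_mul]
        linarith [ha1.1]
      have him2 : 0 < (Complex.I * ((((2*t'+1)/(3-2*t') : ℝ)):ℂ)).im := by
        rw [im_I_mul]
        linarith [ha2.1]
      set z1 := UpperHalfPlane.mk (Complex.I * ((((2*t+1)/(3-2*t) : ℝ)):ℂ)) him1 with hz1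
      set z2 := UpperHalfPlane.mk (Complex.I * ((((2*t'+1)/(3-2*t') : ℝ)):ℂ)) him2 with hz2
      have hk := key_estimate (R := 3) hPdiff hPb z1 z2
      have hW1 : Wmap ((z1 : ℂ)) = ((t:ℝ):ℂ) := Wmap_I_mul ht
      have hW2 : Wmap ((z2 : ℂ)) = ((t':ℝ):ℂ) := Wmap_I_mul ht'
      rw [hW1, hW2] at hk
      have hdist := dist_I_mul_le ha1 ha2 him1 him2
      calc |φ (‖((F i ((t:ℝ):ℂ)).1)‖) - φ (‖((F i ((t':ℝ):ℂ)).1)‖)|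
          ≤ dist z1 z2 := hk
      _ ≤ 5 := hdist
    have hchain : φ ε - φ 1 ≤ N * 5 := by
      apply chain_bound (by norm_num : (0:ℝ) ≤ 5)
        (A := fun i => {v | ∃ t : ℝ, t ∈ Ioo (0:ℝ) 1 ∧ v = φ (‖((F i ((t:ℝ):ℂ)).1)‖)})
      · intro v hv
        obtain ⟨x, hx, hvx⟩ := intermediate_value_Ioo' (le_of_lt hε1) hcont hv
        have hxpos : 0 < x := lt_trans hεpos hx.1
        have hpair : ((((x:ℝ)):ℂ), (((ε/x : ℝ)):ℂ)) ∈ Xe ε := by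
          refine ⟨by simp, by simp, ?_, ?_, ?_⟩
          · simp only [Complex.ofReal_re]
            exact ⟨by linarith [hx.1], hx.2⟩
          · simp only [Complex.ofReal_re]
            constructor
            · have : (0:ℝ) < ε / x := by positivity
              linarith
            · rw [div_lt_one hxpos]
              exact hx.1
          · rw [← Complex.ofReal_mul]
            congr 1
            field_simp
        have hcov2 := hcoverX hpair
        obtain ⟨i, hi⟩ := mem_iUnion.mp hcov2
        obtain ⟨ζ, hζmem, hζeq⟩ := hi
        obtain ⟨s, hs, rfl⟩ := hζmem
        refine mem_iUnion.mpr ⟨i, s, hs, ?_⟩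
        have h1 : ((F i ((s:ℝ):ℂ)).1) = (((x:ℝ)):ℂ) := by rw [hζeq]
        rw [h1, Complex.norm_real, Real.norm_eq_abs, _root_.abs_of_pos hxpos, hvx]
      · rintro i v ⟨t, ht, rfl⟩ v' ⟨t', ht', rfl⟩
        exact hkey i t ht t' ht'
    have hφ1 : φ 1 ≤ 2/5 := by
      simp only [hφdef, div_one]
      exact loglog3_le
    have hφε : Real.log |Real.log ε| ≤ φ ε := by
      simp only [hφdef]
      rw [habsl]
      apply Real.log_le_log (by linarith)
      rw [Real.log_div (by norm_num : (3:ℝ) ≠ 0) hεpos.ne']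
      linarith [Real.log_pos (by norm_num : (1:ℝ) < 3)]
    rw [div_le_iff₀ (by norm_num : (0:ℝ) < 10)]
    have hN0 : (0:ℝ) ≤ (N:ℝ) := Nat.cast_nonneg N
    linarith
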